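/- Let λ ∈ ℂ with λ ∉ ℚ and let f ∈ ℂ[[x,y]] with f(0,0) = 0. Then there exists a formal power series g ∈ ℂ[[x,y]] with g(0,0) = 1 such that the formal change of coordinates Φ(x,y) = (x, y·g(x,y)) transforms the formal 1-form ω = x dy − (λ + f)y dx into a form proportional (by a formal unit) to x dy − λ y dx; i.e., Φ*ω ∧ (x dy − λ y dx) = 0. -/

import Mathlib

open PowerSeries

-- We view `ℂ[[x,y]]` as `R[[y]]` with `R = ℂ[[x]]`.
local notation "R" => PowerSeries ℂ
local notation "S" => PowerSeries (PowerSeries ℂ)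

/-- Composition `f(g)` of formal power series over a commutative ring (intended for `g`
with zero constant term, where the `n`-th coefficient only involves `f₀, …, f_n`). -/
noncomputable def PowerSeries.comp' {A : Type*} [CommRing A] (f g : PowerSeries A) :
    PowerSeries A :=
  PowerSeries.mk fun n =>
    coeff n (∑ i ∈ Finset.range (n + 1), PowerSeries.C (coeff i f) * g ^ i)

/-- The operator `g ↦ x·∂g/∂x` on `ℂ[[x]][[y]]`, acting coefficientwise in `y`. -/
noncomputable def xDx (g : S) : S :=
  PowerSeries.mk fun n => X * derivative ℂ (coeff n g)

-- auxiliary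
noncomputable def rhsS (f G : S) : S := PowerSeries.comp' f (X * G) * G

def Agree (n m : ℕ) (G G' : S) : Prop :=
  ∀ n' ≤ n, ∀ m' ≤ m,
    coeff m' (coeff n' G) = coeff m' (coeff n' G')

lemma Agree.refl (n m : ℕ) (G : S) : Agree n m G G := fun _ _ _ _ => rfl

lemma Agree.mul {n m : ℕ} {G G' H H' : S} (hG : Agree n m G G') (hH : Agree n m H H') :
    Agree n m (G * H) (G' * H') := by
  intro n' hn m' hm
  rw [coeff_mul, coeff_mul, map_sum, map_sum]
  refine Finset.sum_congr rfl fun p hp => ?_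
  have hp' := Finset.HasAntidiagonal.mem_antidiagonal.mp hp
  rw [coeff_mul, coeff_mul]
  refine Finset.sum_congr rfl fun q hq => ?_
  have hq' := Finset.HasAntidiagonal.mem_antidiagonal.mp hq
  rw [hG p.1 (by omega) q.1 (by omega), hH p.2 (by omega) q.2 (by omega)]

lemma Agree.pow {n m : ℕ} {G G' : S} (hG : Agree n m G G') (i : ℕ) :
    Agree n m (G ^ i) (G' ^ i) := by
  induction i with
  | zero => simpa using Agree.refl n m 1
  | succ k ih => rw [pow_succ, pow_succ]; exact ih.mul hG

lemma Agree.sum {n m : ℕ} {ι : Type*} (s : Finset ι) (F F' : ι → S)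
    (h : ∀ i ∈ s, Agree n m (F i) (F' i)) :
    Agree n m (∑ i ∈ s, F i) (∑ i ∈ s, F' i) := by
  intro n' hn m' hm
  rw [map_sum, map_sum, map_sum, map_sum]
  exact Finset.sum_congr rfl fun i hi => h i hi n' hn m' hm

lemma coeff_comp' (f h : S) (n : ℕ) :
    coeff n (PowerSeries.comp' f h)
      = coeff n (∑ i ∈ Finset.range (n + 1),
          PowerSeries.C (coeff i f) * h ^ i) := by
  simp [PowerSeries.comp', coeff_mk]

lemma Agree.comp' {n m : ℕ} (f : S) {h h' : S} (hh : Agree n m h h') :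
    Agree n m (PowerSeries.comp' f h) (PowerSeries.comp' f h') := by
  intro n' hn m' hm
  rw [coeff_comp', coeff_comp']
  exact Agree.sum (Finset.range (n' + 1)) _ _
    (fun i _ => (Agree.refl n m _).mul (hh.pow i)) n' hn m' hm

lemma crux (n m : ℕ) (f G G' : S)
    (hf0 : coeff 0 (coeff 0 f) = 0)
    (h : ∀ n' ≤ n, ∀ m' ≤ m, (n' ≠ n ∨ m' ≠ m) →
      coeff m' (coeff n' G) = coeff m' (coeff n' G')) :
    coeff m (coeff n (rhsS f G))
      = coeff m (coeff n (rhsS f G')) := by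
  have hXG : Agree n m (X * G) (X * G') := by
    intro n' hn' m' hm'
    cases n' with
    | zero => simp
    | succ k =>
      rw [coeff_succ_X_mul, coeff_succ_X_mul]
      exact h k (by omega) m' hm' (Or.inl (by omega))
  have hF := hXG.comp' f
  have hF00 : ∀ H : S, coeff 0 (coeff 0 (PowerSeries.comp' f H)) = 0 := by
    intro H
    rw [coeff_comp']
    simp only [zero_add, Finset.range_one, Finset.sum_singleton, pow_zero, mul_one,
      coeff_zero_C]
    exact hf0
  unfold rhsS
  rw [coeff_mul, map_sum, coeff_mul, map_sum]
  refine Finset.sum_congr rfl fun p hp => ?_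
  have hp' := Finset.HasAntidiagonal.mem_antidiagonal.mp hp
  rw [coeff_mul, coeff_mul]
  refine Finset.sum_congr rfl fun q hq => ?_
  have hq' := Finset.HasAntidiagonal.mem_antidiagonal.mp hq
  by_cases hc : p.2 = n ∧ q.2 = m
  · have hp1 : p.1 = 0 := by omega
    have hq1 : q.1 = 0 := by omega
    rw [hp1, hq1, hF00 (X * G), hF00 (X * G'), zero_mul, zero_mul]
  · have hc' : p.2 ≠ n ∨ q.2 ≠ m := by tauto
    rw [hF p.1 (by omega) q.1 (by omega), h p.2 (by omega) q.2 (by omega) hc']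

noncomputable def cfun (f : S) (lam : ℂ) : ℕ × ℕ → ℂ :=
  WellFounded.fix (InvImage.wf (fun p : ℕ × ℕ => p.1 + p.2) Nat.lt_wfRel.wf)
    (fun p ih =>
      if p = (0, 0) then 1
      else ((p.2 : ℂ) + lam * p.1)⁻¹ *
        coeff p.2 (coeff p.1 (rhsS f
          (PowerSeries.mk fun n' => PowerSeries.mk fun m' =>
            if h : n' + m' < p.1 + p.2 then ih (n', m') h else 0))))

noncomputable def gpartial (f : S) (lam : ℂ) (p : ℕ × ℕ) : S :=
  PowerSeries.mk fun n' => PowerSeries.mk fun m' =>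
    if n' + m' < p.1 + p.2 then cfun f lam (n', m') else 0

lemma cfun_eq (f : S) (lam : ℂ) (p : ℕ × ℕ) :
    cfun f lam p = if p = (0, 0) then 1
      else ((p.2 : ℂ) + lam * p.1)⁻¹ *
        coeff p.2 (coeff p.1 (rhsS f (gpartial f lam p))) := by
  conv_lhs => rw [cfun, WellFounded.fix_eq]
  rfl

noncomputable def gdef (f : S) (lam : ℂ) : S :=
  PowerSeries.mk fun n => PowerSeries.mk fun m => cfun f lam (n, m)

lemma gdef_coeff (f : S) (lam : ℂ) (n m : ℕ) :
    coeff m (coeff n (gdef f lam)) = cfun f lam (n, m) := by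
  simp [gdef, coeff_mk]

lemma rhs_agree (f : S) (lam : ℂ) (hf0 : coeff 0 (coeff 0 f) = 0) (n m : ℕ) :
    coeff m (coeff n (rhsS f (gdef f lam)))
      = coeff m (coeff n (rhsS f (gpartial f lam (n, m)))) := by
  refine crux n m f _ _ hf0 ?_
  intro n' hn m' hm hne
  rw [gdef_coeff]
  have hlt : n' + m' < n + m := by omega
  simp [gpartial, coeff_mk, hlt]

lemma nonvanish (lam : ℂ) (hlam : ∀ r : ℚ, lam ≠ (r : ℂ)) (n m : ℕ) (h : ¬(n = 0 ∧ m = 0)) :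
    (m : ℂ) + lam * n ≠ 0 := by
  rcases Nat.eq_zero_or_pos n with hn | hn
  · subst hn
    simp only [Nat.cast_zero, mul_zero, add_zero]
    exact_mod_cast fun hm => h ⟨rfl, by exact_mod_cast hm⟩
  · intro heq
    apply hlam (-(m : ℚ) / (n : ℚ))
    have hn0 : (n : ℂ) ≠ 0 := Nat.cast_ne_zero.mpr (by omega)
    push_cast
    rw [eq_div_iff hn0]
    linear_combination heq

lemma key_eq (f : S) (lam : ℂ) (hlam : ∀ r : ℚ, lam ≠ (r : ℂ))
    (hf0 : coeff 0 (coeff 0 f) = 0) (n m : ℕ) :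
    ((m : ℂ) + lam * n) * cfun f lam (n, m)
      = coeff m (coeff n (rhsS f (gdef f lam))) := by
  by_cases h00 : n = 0 ∧ m = 0
  · obtain ⟨rfl, rfl⟩ := h00
    simp only [Nat.cast_zero, mul_zero, add_zero, zero_mul]
    -- RHS is zero
    unfold rhsS
    rw [coeff_mul]
    rw [Finset.Nat.antidiagonal_zero]
    rw [Finset.sum_singleton, coeff_mul, Finset.Nat.antidiagonal_zero, Finset.sum_singleton]
    have : coeff 0 (coeff 0 (PowerSeries.comp' f (X * gdef f lam))) = 0 := by
      rw [coeff_comp']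
      simp only [zero_add, Finset.range_one, Finset.sum_singleton, pow_zero, mul_one,
        coeff_zero_C]
      exact hf0
    rw [this, zero_mul]
  · rw [rhs_agree f lam hf0 n m]
    have hne : ((n, m) : ℕ × ℕ) ≠ (0, 0) := by
      intro hc
      rw [Prod.mk.injEq] at hc
      exact h00 hc
    rw [show cfun f lam (n, m) = _ from cfun_eq f lam (n, m), if_neg hne]
    rw [← mul_assoc, mul_inv_cancel₀ (nonvanish lam hlam n m h00), one_mul]

lemma lhs_coeff (f : S) (lam : ℂ) (n m : ℕ) :
    coeff m (coeff n
        (xDx (gdef f lam) + PowerSeries.C (PowerSeries.C lam) *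
          (X * derivative (PowerSeries ℂ) (gdef f lam))))
      = ((m : ℂ) + lam * n) * cfun f lam (n, m) := by
  rw [map_add, map_add]
  have h1 : coeff m (coeff n (xDx (gdef f lam)))
      = (m : ℂ) * cfun f lam (n, m) := by
    rw [xDx, coeff_mk]
    cases m with
    | zero => simp
    | succ k =>
      rw [coeff_succ_X_mul, PowerSeries.coeff_derivative, gdef_coeff]
      push_cast; ring
  have h2 : coeff m (coeff n
      (PowerSeries.C (PowerSeries.C lam) *
        (X * derivative (PowerSeries ℂ) (gdef f lam))))
      = lam * (n : ℂ) * cfun f lam (n, m) := by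
    rw [coeff_C_mul]
    cases n with
    | zero => simp
    | succ k =>
      rw [coeff_succ_X_mul, PowerSeries.coeff_derivative]
      have hcast : ((k : PowerSeries ℂ) + 1) = PowerSeries.C ((k : ℂ) + 1) := by
        rw [map_add, map_natCast, map_one]
      rw [hcast, coeff_C_mul, coeff_mul_C, gdef_coeff]
      push_cast; ring
  rw [h1, h2]; ring

lemma series_eq (f : S) (lam : ℂ) (hlam : ∀ r : ℚ, lam ≠ (r : ℂ))
    (hf0 : coeff 0 (coeff 0 f) = 0) :
    xDx (gdef f lam) + PowerSeries.C (PowerSeries.C lam) *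
        (X * derivative (PowerSeries ℂ) (gdef f lam))
      = PowerSeries.comp' f (X * gdef f lam) * gdef f lam := by
  apply PowerSeries.ext; intro n
  apply PowerSeries.ext; intro m
  rw [lhs_coeff, key_eq f lam hlam hf0 n m]; rfl


/-- formal Poincaré–Dulac linearization of a non-resonant saddle:
let `λ ∉ ℚ` and `f ∈ ℂ[[x,y]]` with `f(0,0) = 0`.  Then there is `g ∈ ℂ[[x,y]]` with
`g(0,0) = 1` such that `Φ(x,y) = (x, y·g)` transforms `ω = x dy − (λ+f) y dx` into a
form proportional to `ω₀ = x dy − λ y dx`, i.e. `Φ*ω ∧ ω₀ = 0`.  Writing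
`Φ*ω = P dx + Q dy` with `P = −(λ + f∘Φ)·y·g + y·(x·∂g/∂x)` and `Q = x·(g + y·∂g/∂y)`,
this says `P·x + λ·y·Q = 0` in `ℂ[[x]][[y]]`. -/
theorem formal_linearization_nonresonant_saddle
    (lam : ℂ) (hlam : ∀ r : ℚ, lam ≠ (r : ℂ))
    (f : S) (hf : constantCoeff (constantCoeff f) = 0) :
    ∃ g : S, constantCoeff (constantCoeff g) = 1 ∧
      (let y : S := X
       let x : S := PowerSeries.C X
       let lamS : S := PowerSeries.C (PowerSeries.C lam)
       let fΦ : S := PowerSeries.comp' f (y * g)      -- f(x, y·g)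
       let P : S := -(lamS + fΦ) * (y * g) + y * xDx g
       let Q : S := x * (g + y * derivative (PowerSeries ℂ) g)
       P * x + lamS * y * Q = 0) := by
  have hf0 : coeff 0 (coeff 0 f) = 0 := by
    simpa [coeff_zero_eq_constantCoeff] using hf
  refine ⟨gdef f lam, ?_, ?_⟩
  · have h := gdef_coeff f lam 0 0
    rw [cfun_eq, if_pos rfl] at h
    simpa using h
  · have E := series_eq f lam hlam hf0
    dsimp only
    linear_combination (PowerSeries.C X * (X : S)) * E
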